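/- Let n and i be natural numbers, and let S₁, …, S_c be finite sets such that |S_a ∩ S_b| ≤ 1 for all a ≠ b and |S₁ ∪ ⋯ ∪ S_c| ≤ ⌈n / 2^i⌉. Then there is at most one index j with |S_j| > ⌈n / 2^{i+1}⌉. -/

import Mathlib

/-- `ceilDiv2 n k = ⌈n / 2^k⌉`, the least natural number `m` with `n ≤ m * 2^k`. -/
def ceilDiv2 (n k : ℕ) : ℕ := (n + 2 ^ k - 1) / 2 ^ k

lemma le_ceilDiv2_mul (n k : ℕ) : n ≤ ceilDiv2 n k * 2 ^ k := by
  have hd : 0 < 2 ^ k := Nat.pow_pos (by norm_num)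
  have h := Nat.div_add_mod (n + 2 ^ k - 1) (2 ^ k)
  have hr := Nat.mod_lt (n + 2 ^ k - 1) hd
  unfold ceilDiv2
  rw [Nat.mul_comm]
  set t := 2 ^ k * ((n + 2 ^ k - 1) / 2 ^ k) with ht
  omega

lemma ceilDiv2_le (n k m : ℕ) (h : n ≤ m * 2 ^ k) : ceilDiv2 n k ≤ m := by
  have hd : 0 < 2 ^ k := Nat.pow_pos (by norm_num)
  unfold ceilDiv2
  rw [Nat.div_le_iff_le_mul_add_pred hd]
  have : 2 ^ k * m = m * 2 ^ k := Nat.mul_comm _ _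
  omega

lemma ceilDiv2_succ (n i : ℕ) : ceilDiv2 n i ≤ 2 * ceilDiv2 n (i + 1) := by
  apply ceilDiv2_le
  have := le_ceilDiv2_mul n (i + 1)
  calc n ≤ ceilDiv2 n (i+1) * 2 ^ (i+1) := this
    _ = 2 * ceilDiv2 n (i+1) * 2 ^ i := by ring
  
/-- Let `n` and `i` be natural numbers, and let `S₁, …, S_c` be finite sets such that
`|S_a ∩ S_b| ≤ 1` for all `a ≠ b` and `|S₁ ∪ ⋯ ∪ S_c| ≤ ⌈n / 2^i⌉`. Then there is at
most one index `j` with `|S_j| > ⌈n / 2^{i+1}⌉`. -/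
theorem at_most_one_large_set {α : Type*} [DecidableEq α] (n i c : ℕ)
    (S : Fin c → Finset α)
    (hpair : ∀ a b : Fin c, a ≠ b → ((S a) ∩ (S b)).card ≤ 1)
    (hunion : (Finset.univ.biUnion S).card ≤ ceilDiv2 n i) :
    ∀ j k : Fin c, ceilDiv2 n (i + 1) < (S j).card → ceilDiv2 n (i + 1) < (S k).card →
      j = k := by
  intro j k hj hk
  by_contra hne
  have hinter := hpair j k hne
  have hsub : S j ∪ S k ⊆ Finset.univ.biUnion S := by
    intro x hx
    simp only [Finset.mem_union] at hx
    rcases hx with h | h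
    · exact Finset.mem_biUnion.2 ⟨j, Finset.mem_univ _, h⟩
    · exact Finset.mem_biUnion.2 ⟨k, Finset.mem_univ _, h⟩
  have hcard := Finset.card_le_card hsub
  have hie : (S j ∪ S k).card + (S j ∩ S k).card = (S j).card + (S k).card :=
    Finset.card_union_add_card_inter _ _
  have := ceilDiv2_succ n i
  omega
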